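/- For each integer m ≥ 0 there exists a constant C'_m > 0, independent of t, x, and y, such that for all t > 0 and x, y ≥ 0, |∂ₓᵐ K(t,x,y)| ≤ C'_m t^{−(m+1)/4}. -/

import Mathlib

open MeasureTheory Filter Set

/-- `Φ(r) = e^{-r} + sin r - cos r`. -/
noncomputable def Phi (r : ℝ) : ℝ := Real.exp (-r) + Real.sin r - Real.cos r

/-- The clamped biharmonic heat kernel on the half-line. -/
noncomputable def K (t x y : ℝ) : ℝ :=
  (1 / Real.pi) * ∫ k in Set.Ioi (0:ℝ), Real.exp (-k ^ 4 * t) * Phi (k * x) * Phi (k * y)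

/-- `n`-th derivative of `Phi`. -/
noncomputable def PhiD (n : ℕ) (r : ℝ) : ℝ :=
  (-1)^n * Real.exp (-r) + Real.sin (r + n * (Real.pi/2)) - Real.cos (r + n * (Real.pi/2))

lemma PhiD_zero (r : ℝ) : PhiD 0 r = Phi r := by simp [PhiD, Phi]

lemma continuous_PhiD (n : ℕ) : Continuous (PhiD n) := by
  unfold PhiD; fun_prop

lemma hasDerivAt_PhiD (n : ℕ) (r : ℝ) : HasDerivAt (PhiD n) (PhiD (n+1) r) r := by
  have he : HasDerivAt (fun r : ℝ => Real.exp (-r)) (Real.exp (-r) * (-1)) r :=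
    ((hasDerivAt_id r).neg).exp
  have hs : HasDerivAt (fun r : ℝ => Real.sin (r + n * (Real.pi/2)))
      (Real.cos (r + n * (Real.pi/2)) * 1) r :=
    (((hasDerivAt_id r).add_const _)).sin
  have hc : HasDerivAt (fun r : ℝ => Real.cos (r + n * (Real.pi/2)))
      (-Real.sin (r + n * (Real.pi/2)) * 1) r :=
    (((hasDerivAt_id r).add_const _)).cos
  have := ((he.const_mul ((-1:ℝ)^n)).add hs).sub hc
  refine this.congr_deriv ?_
  simp only [PhiD, Nat.cast_add, Nat.cast_one]
  rw [show r + ((n:ℝ)+1) * (Real.pi/2) = (r + n * (Real.pi/2)) + Real.pi/2 by ring,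
    Real.sin_add_pi_div_two, Real.cos_add_pi_div_two, pow_succ]
  ring

lemma abs_PhiD_le (n : ℕ) (r : ℝ) : |PhiD n r| ≤ Real.exp (-r) + 2 := by
  have h1 : |(-1:ℝ)^n * Real.exp (-r)| = Real.exp (-r) := by
    simp [abs_mul, abs_pow, Real.abs_exp]
  calc |PhiD n r| ≤ |(-1:ℝ)^n * Real.exp (-r) + Real.sin (r + n * (Real.pi/2))|
        + |Real.cos (r + n * (Real.pi/2))| := abs_sub _ _
    _ ≤ (|(-1:ℝ)^n * Real.exp (-r)| + |Real.sin (r + n * (Real.pi/2))|)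
        + |Real.cos (r + n * (Real.pi/2))| := by
        gcongr; exact abs_add_le _ _
    _ ≤ (Real.exp (-r) + 1) + 1 := by
        rw [h1]; gcongr
        · exact Real.abs_sin_le_one _
        · exact Real.abs_cos_le_one _
    _ = Real.exp (-r) + 2 := by ring

lemma abs_PhiD_le_three (n : ℕ) {r : ℝ} (hr : 0 ≤ r) : |PhiD n r| ≤ 3 := by
  have := abs_PhiD_le n r
  have : Real.exp (-r) ≤ 1 := Real.exp_le_one_iff.mpr (by linarith)
  linarith [abs_PhiD_le n r]

lemma abs_Phi_le_three {r : ℝ} (hr : 0 ≤ r) : |Phi r| ≤ 3 := by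
  rw [← PhiD_zero]; exact abs_PhiD_le_three 0 hr

/-- Integrability of `k^p * exp(-a k^4 + b k)` on `(0,∞)`. -/
lemma integrable_aux (p : ℕ) {a : ℝ} (ha : 0 < a) (b : ℝ) :
    IntegrableOn (fun k : ℝ => k ^ p * Real.exp (-a * k^4 + b*k)) (Ioi 0) := by
  set M : ℝ := |b| * max 1 (2*|b|/a) with hM
  have key : ∀ k : ℝ, 0 < k → b * k ≤ (a/2) * k^4 + M := by
    intro k hk
    rcases le_total k (max 1 (2*|b|/a)) with h | h
    · have h1 : b * k ≤ |b| * k := by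
        have := le_abs_self b; nlinarith
      have h2 : |b| * k ≤ M := by
        rw [hM]; have := abs_nonneg b; nlinarith
      nlinarith [pow_nonneg hk.le 4]
    · have h1 : (1:ℝ) ≤ k := le_trans (le_max_left _ _) h
      have h2 : 2*|b|/a ≤ k := le_trans (le_max_right _ _) h
      have h3 : 2*|b| ≤ a * k := by
        rw [div_le_iff₀ ha] at h2; linarith
      have hb' := le_abs_self b
      have h4 : b * k ≤ |b| * k := by nlinarith
      have h5 : |b| * k ≤ (a/2) * k^2 := by nlinarith
      have hk2 : (1:ℝ) ≤ k^2 := by nlinarith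
      have h6 : k^2 ≤ k^4 := by nlinarith [sq_nonneg k]
      have h7 : 0 ≤ M := by positivity
      nlinarith
  have hint : IntegrableOn
      (fun k : ℝ => Real.exp M * (k ^ ((p:ℝ)) * Real.exp (-(a/2) * k ^ (4:ℝ)))) (Ioi 0) :=
    (integrableOn_rpow_mul_exp_neg_mul_rpow (neg_one_lt_zero.trans_le (Nat.cast_nonneg p))
      (by norm_num) (by positivity)).const_mul _
  refine Integrable.mono' hint ?_ ?_
  · apply Continuous.aestronglyMeasurable; fun_prop
  · filter_upwards [ae_restrict_mem measurableSet_Ioi] with k hk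
    have hk' : (0:ℝ) < k := hk
    have h1 : k ^ ((p:ℝ)) = k ^ p := Real.rpow_natCast k p
    have h2 : k ^ ((4:ℝ)) = k ^ (4:ℕ) := by
      rw [show ((4:ℝ)) = ((4:ℕ):ℝ) by norm_num, Real.rpow_natCast]
    rw [Real.norm_eq_abs, abs_mul, abs_pow, abs_of_pos hk', Real.abs_exp, h1, h2]
    have h3 : Real.exp (-a*k^4 + b*k) ≤ Real.exp (M + -(a/2)*k^4) :=
      Real.exp_le_exp.mpr (by nlinarith [key k hk'])
    calc k^p * Real.exp (-a*k^4 + b*k) ≤ k^p * Real.exp (M + -(a/2)*k^4) := by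
          exact mul_le_mul_of_nonneg_left h3 (by positivity)
      _ = Real.exp M * (k^p * Real.exp (-(a/2)*k^4)) := by rw [Real.exp_add]; ring

/-- The family of integrals: `Fa t y n x` is what the `n`-th `x`-derivative of `K t x y`
should be. -/
noncomputable def Fa (t y : ℝ) (n : ℕ) (x : ℝ) : ℝ :=
  (1 / Real.pi) * ∫ k in Ioi (0:ℝ),
    Real.exp (-k ^ 4 * t) * (k^n * PhiD n (k * x)) * Phi (k * y)

lemma Fa_zero (t y x : ℝ) : Fa t y 0 x = K t x y := by
  simp [Fa, K, PhiD_zero]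

lemma integrand_bound {t : ℝ} (ht : 0 < t) {y : ℝ} (hy : 0 ≤ y) (n : ℕ) {k : ℝ}
    (hk : 0 < k) (z c : ℝ) (hc : 0 ≤ c) (hz : -c ≤ z) :
    |Real.exp (-k ^ 4 * t) * (k^n * PhiD n (k * z)) * Phi (k * y)|
      ≤ 9 * (k ^ n * Real.exp (-t * k^4 + c * k)) := by
  have hPy : |Phi (k * y)| ≤ 3 := abs_Phi_le_three (by positivity)
  have hPz : |PhiD n (k * z)| ≤ 3 * Real.exp (c * k) := by
    have h1 : Real.exp (-(k*z)) ≤ Real.exp (c * k) := by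
      apply Real.exp_le_exp.mpr; nlinarith
    have h2 : (2:ℝ) ≤ 2 * Real.exp (c * k) := by
      nlinarith [Real.one_le_exp (show (0:ℝ) ≤ c * k by positivity)]
    calc |PhiD n (k * z)| ≤ Real.exp (-(k*z)) + 2 := abs_PhiD_le n _
      _ ≤ 3 * Real.exp (c * k) := by linarith
  calc |Real.exp (-k ^ 4 * t) * (k^n * PhiD n (k * z)) * Phi (k * y)|
      = Real.exp (-k ^ 4 * t) * (k^n * |PhiD n (k * z)|) * |Phi (k * y)| := by
        rw [abs_mul, abs_mul, abs_mul, Real.abs_exp, abs_pow, abs_of_pos hk]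
    _ ≤ Real.exp (-k ^ 4 * t) * (k^n * (3 * Real.exp (c * k))) * 3 := by
        have h0 : (0:ℝ) ≤ Real.exp (-k^4*t) := Real.exp_nonneg _
        have h1 : (0:ℝ) ≤ k ^ n := by positivity
        apply mul_le_mul _ hPy (abs_nonneg _) (by positivity)
        exact mul_le_mul_of_nonneg_left (mul_le_mul_of_nonneg_left hPz h1) h0
    _ = 9 * (k ^ n * (Real.exp (-k^4*t) * Real.exp (c * k))) := by ring
    _ = 9 * (k ^ n * Real.exp (-t * k^4 + c * k)) := by
        rw [← Real.exp_add, show -k^4*t + c*k = -t*k^4 + c*k by ring]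

lemma integrable_integrand {t : ℝ} (ht : 0 < t) {y : ℝ} (hy : 0 ≤ y) (n : ℕ) (z : ℝ)
    (hz : -(|z|+1) ≤ z) :
    IntegrableOn (fun k : ℝ =>
      Real.exp (-k ^ 4 * t) * (k^n * PhiD n (k * z)) * Phi (k * y)) (Ioi 0) := by
  refine Integrable.mono' (((integrable_aux n ht (|z|+1)).const_mul 9)) ?_ ?_
  · apply Continuous.aestronglyMeasurable
    have := continuous_PhiD n
    unfold Phi; fun_prop
  · filter_upwards [ae_restrict_mem measurableSet_Ioi] with k hk
    rw [Real.norm_eq_abs]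
    exact integrand_bound ht hy n hk z (|z|+1) (by positivity) hz

lemma hasDerivAt_Fa {t : ℝ} (ht : 0 < t) {y : ℝ} (hy : 0 ≤ y) (n : ℕ) (x : ℝ) :
    HasDerivAt (Fa t y n) (Fa t y (n+1) x) x := by
  unfold Fa
  apply HasDerivAt.const_mul
  have hball : ∀ z ∈ Metric.ball x 1, -(|x|+1) ≤ z := by
    intro z hz
    rw [Metric.mem_ball, Real.dist_eq] at hz
    have h1 := (abs_lt.mp hz).1
    have h2 := neg_abs_le x
    linarith
  have key := hasDerivAt_integral_of_dominated_loc_of_deriv_le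
    (F := fun z k => Real.exp (-k ^ 4 * t) * (k^n * PhiD n (k * z)) * Phi (k * y))
    (F' := fun z k => Real.exp (-k ^ 4 * t) * (k^(n+1) * PhiD (n+1) (k * z)) * Phi (k * y))
    (bound := fun k => 9 * (k ^ (n+1) * Real.exp (-t * k^4 + (|x|+1) * k)))
    (μ := volume.restrict (Ioi (0:ℝ))) (x₀ := x) (s := Metric.ball x 1) (Metric.ball_mem_nhds x one_pos)
    ?_ ?_ ?_ ?_ ?_ ?_
  · exact key.2
  · filter_upwards with z
    apply Continuous.aestronglyMeasurable
    have := continuous_PhiD n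
    unfold Phi; fun_prop
  · exact integrable_integrand ht hy n x (by nlinarith [neg_abs_le x, abs_nonneg x])
  · apply Continuous.aestronglyMeasurable
    have := continuous_PhiD (n+1)
    unfold Phi; fun_prop
  · filter_upwards [ae_restrict_mem measurableSet_Ioi] with k hk z hz
    rw [Real.norm_eq_abs]
    exact integrand_bound ht hy (n+1) hk z (|x|+1) (by positivity) (hball z hz)
  · exact (integrable_aux (n+1) ht (|x|+1)).const_mul 9
  · filter_upwards [ae_restrict_mem measurableSet_Ioi] with k hk z hz
    have H : HasDerivAt (fun w : ℝ => PhiD n (k * w)) (k * PhiD (n+1) (k * z)) z := by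
      have := (hasDerivAt_PhiD n (k * z)).comp z ((hasDerivAt_id z).const_mul k)
      exact this.congr_deriv (by ring)
    have := (H.const_mul (Real.exp (-k ^ 4 * t) * k^n)).mul_const (Phi (k * y))
    refine (this.congr_deriv ?_).congr_of_eventuallyEq (Filter.Eventually.of_forall fun w => ?_)
    · beta_reduce; ring
    · beta_reduce; ring

lemma iteratedDeriv_Fa {t : ℝ} (ht : 0 < t) {y : ℝ} (hy : 0 ≤ y) :
    ∀ (m n : ℕ) (x : ℝ), iteratedDeriv m (Fa t y n) x = Fa t y (m + n) x := by
  intro m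
  induction m with
  | zero => intro n x; simp
  | succ m ih =>
    intro n x
    rw [iteratedDeriv_succ']
    have hder : deriv (Fa t y n) = Fa t y (n+1) :=
      funext fun z => (hasDerivAt_Fa ht hy n z).deriv
    rw [hder, ih (n+1), show m + (n+1) = m + 1 + n by omega]

/-- uniform pointwise bounds `|∂ₓᵐ K(t,x,y)| ≤ C'ₘ t^{-(m+1)/4}`
for all `t > 0` and `x, y ≥ 0`. -/
theorem stmt7 (m : ℕ) :
    ∃ C > (0:ℝ), ∀ t > (0:ℝ), ∀ x ≥ (0:ℝ), ∀ y ≥ (0:ℝ),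
      |iteratedDeriv m (fun z => K t z y) x| ≤ C * t ^ (-((m : ℝ) + 1) / 4) := by
  have hΓ : 0 < Real.Gamma (((m:ℝ) + 1) / 4) := Real.Gamma_pos_of_pos (by positivity)
  refine ⟨(1 / Real.pi) * 9 * ((1/4) * Real.Gamma (((m:ℝ) + 1) / 4)), ?_, ?_⟩
  · have := Real.pi_pos; positivity
  intro t ht x hx y hy
  have hK : (fun z => K t z y) = Fa t y 0 := funext fun z => (Fa_zero t y z).symm
  rw [hK, iteratedDeriv_Fa ht hy m 0 x]
  have hval : ∫ k in Ioi (0:ℝ), k ^ ((m:ℝ)) * Real.exp (-t * k ^ (4:ℝ))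
      = t ^ (-((m:ℝ) + 1) / 4) * (1/4) * Real.Gamma (((m:ℝ) + 1) / 4) :=
    integral_rpow_mul_exp_neg_mul_rpow (by norm_num)
      (neg_one_lt_zero.trans_le (Nat.cast_nonneg m)) ht
  have hbound : |∫ k in Ioi (0:ℝ),
      Real.exp (-k ^ 4 * t) * (k^(m+0) * PhiD (m+0) (k * x)) * Phi (k * y)|
      ≤ ∫ k in Ioi (0:ℝ), 9 * (k ^ ((m:ℝ)) * Real.exp (-t * k ^ (4:ℝ))) := by
    rw [← Real.norm_eq_abs]
    apply norm_integral_le_of_norm_le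
    · apply Integrable.const_mul
      exact integrableOn_rpow_mul_exp_neg_mul_rpow
        (neg_one_lt_zero.trans_le (Nat.cast_nonneg m)) (by norm_num) ht
    · filter_upwards [ae_restrict_mem measurableSet_Ioi] with k hk
      have hk' : (0:ℝ) < k := hk
      have h1 : k ^ ((m:ℝ)) = k ^ m := Real.rpow_natCast k m
      have h2 : k ^ ((4:ℝ)) = k ^ (4:ℕ) := by
        rw [show ((4:ℝ)) = ((4:ℕ):ℝ) by norm_num, Real.rpow_natCast]
      rw [Real.norm_eq_abs, h1, h2]
      have := integrand_bound ht hy (m+0) hk' x 0 le_rfl (by simpa using hx)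
      simpa using this
  rw [Fa, abs_mul, abs_of_pos (by positivity : (0:ℝ) < 1 / Real.pi)]
  calc (1 / Real.pi) * |∫ k in Ioi (0:ℝ),
        Real.exp (-k ^ 4 * t) * (k^(m+0) * PhiD (m+0) (k * x)) * Phi (k * y)|
      ≤ (1 / Real.pi) * ∫ k in Ioi (0:ℝ), 9 * (k ^ ((m:ℝ)) * Real.exp (-t * k ^ (4:ℝ))) := by
        have := Real.pi_pos; gcongr
    _ = (1 / Real.pi) * (9 * (t ^ (-((m:ℝ) + 1) / 4) * (1/4) * Real.Gamma (((m:ℝ) + 1) / 4))) := by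
        rw [integral_const_mul, hval]
    _ = (1 / Real.pi) * 9 * ((1/4) * Real.Gamma (((m:ℝ) + 1) / 4)) * t ^ (-((m:ℝ) + 1) / 4) := by
        ring
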